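/- Let P' be a finite nonempty set of points in ℝ^d whose minimum enclosing ball has radius r_opt > 0, let ε ∈ (0,1), and let h = ⌈2/ε⌉ + 1. Then there is no sequence of points p_1, …, p_h ∈ P' such that for every i with 1 ≤ i ≤ h−1 one has ‖p_{i+1} − c_i‖ > (1+ε)·r_opt, where c_i denotes the center of the minimum enclosing ball of {p_1, …, p_i}. Equivalently, for any such sequence of points of P' there must exist an index i ≤ h−1 at which every point of P' lies within distance (1+ε)·r_opt of c_i or the selection condition fails. -/

import Mathlib

/-- `IsMEB P c r` says the closed ball of center `c` and radius `r` is the minimum enclosing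
ball of `P`: it contains `P`, and any ball containing `P` has radius at least `r`. -/
def IsMEB {d : ℕ} (P : Set (EuclideanSpace ℝ (Fin d)))
    (c : EuclideanSpace ℝ (Fin d)) (r : ℝ) : Prop :=
  (∀ p ∈ P, dist p c ≤ r) ∧
    ∀ (c' : EuclideanSpace ℝ (Fin d)) (r' : ℝ), (∀ p ∈ P, dist p c' ≤ r') → r ≤ r'


lemma meb_pythagoras {d : ℕ} {S : Set (EuclideanSpace ℝ (Fin d))} (hS : S.Nonempty)
    {c c' : EuclideanSpace ℝ (Fin d)} {r R : ℝ} (hmeb : IsMEB S c r)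
    (hR : ∀ s ∈ S, dist s c' ≤ R) : r ^ 2 + dist c c' ^ 2 ≤ R ^ 2 := by
  obtain ⟨s₀, hs₀⟩ := hS
  have hr0 : 0 ≤ r := le_trans dist_nonneg (hmeb.1 _ hs₀)
  have hrR : r ≤ R := hmeb.2 c' R hR
  set δ := dist c c' with hδdef
  by_contra hcon
  push_neg at hcon
  have hδ0 : 0 ≤ δ := dist_nonneg
  have hR2 : r ^ 2 ≤ R ^ 2 := pow_le_pow_left₀ hr0 hrR 2
  set η := r ^ 2 + δ ^ 2 - R ^ 2 with hηdef
  have hη : 0 < η := by simp only [hηdef]; linarith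
  have hηδ : η ≤ δ ^ 2 := by simp only [hηdef]; linarith
  have hδ2 : 0 < δ ^ 2 := lt_of_lt_of_le hη hηδ
  have hδpos : 0 < δ := by nlinarith
  set t : ℝ := η / (2 * δ ^ 2) with htdef
  have ht0 : 0 < t := by positivity
  have ht1 : t ≤ 1 / 2 := by
    rw [htdef, div_le_iff₀ (by positivity)]; nlinarith
  set m := c + t • (c' - c) with hmdef
  have key : ∀ s ∈ S, dist s m ^ 2 ≤ r ^ 2 - t * η + t ^ 2 * δ ^ 2 := by
    intro s hs
    have h1 : dist s c ≤ r := hmeb.1 s hs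
    have h2 : dist s c' ≤ R := hR s hs
    have hsm : dist s m = ‖(s - c) - t • (c' - c)‖ := by
      rw [dist_eq_norm, hmdef]
      congr 1
      abel
    set u := s - c with hu
    set v := c' - c with hv
    have expand : ‖u - t • v‖ ^ 2 = ‖u‖ ^ 2 - 2 * t * (inner ℝ u v : ℝ) + t ^ 2 * ‖v‖ ^ 2 := by
      rw [norm_sub_sq_real, real_inner_smul_right, norm_smul, Real.norm_eq_abs,
        abs_of_pos ht0]
      ring
    have huv : ‖u - v‖ ^ 2 = ‖u‖ ^ 2 - 2 * (inner ℝ u v : ℝ) + ‖v‖ ^ 2 := norm_sub_sq_real u v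
    have huv2 : ‖u - v‖ = dist s c' := by
      rw [dist_eq_norm]; congr 1; simp only [hu, hv]; abel
    have hvδ : ‖v‖ = δ := by rw [hδdef, dist_eq_norm, hv, norm_sub_rev]
    have hur : ‖u‖ ≤ r := by rw [hu, ← dist_eq_norm]; exact h1
    have hu0 : 0 ≤ ‖u‖ := norm_nonneg _
    have hscR : ‖u - v‖ ^ 2 ≤ R ^ 2 := by
      rw [huv2]; exact pow_le_pow_left₀ dist_nonneg h2 2
    rw [hsm, expand, hvδ]
    rw [hvδ] at huv
    rw [huv] at hscR
    nlinarith [sq_nonneg ‖u‖, mul_le_mul_of_nonneg_left (pow_le_pow_left₀ hu0 hur 2) (by linarith : (0:ℝ) ≤ 1 - t), mul_le_mul_of_nonneg_left hscR ht0.le]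
  have hX0 : 0 ≤ r ^ 2 - t * η + t ^ 2 * δ ^ 2 := le_trans (sq_nonneg _) (key s₀ hs₀)
  set r' := Real.sqrt (r ^ 2 - t * η + t ^ 2 * δ ^ 2) with hr'def
  have hall : ∀ s ∈ S, dist s m ≤ r' := by
    intro s hs
    rw [hr'def]
    rw [show dist s m = Real.sqrt (dist s m ^ 2) by rw [Real.sqrt_sq dist_nonneg]]
    exact Real.sqrt_le_sqrt (key s hs)
  have hle : r ≤ r' := hmeb.2 m r' hall
  have : r ^ 2 ≤ r ^ 2 - t * η + t ^ 2 * δ ^ 2 := by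
    calc r ^ 2 ≤ r' ^ 2 := pow_le_pow_left₀ hr0 hle 2
    _ = _ := Real.sq_sqrt hX0
  have htδ : t ^ 2 * δ ^ 2 = t * η / 2 := by
    rw [htdef]; field_simp
  rw [htδ] at this
  nlinarith [mul_pos ht0 hη]

lemma step_arith (a x R ri : ℝ) (ha : 0 < a) (hx2 : 2 ≤ x)
    (hIH : a * (x - 1) < (x + 1) * ri) (hk : ri ^ 2 + a ^ 2 < 2 * a * R) :
    a * x < (x + 2) * R := by
  have hri0 : 0 ≤ ri := by nlinarith
  have t2 : (a * (x - 1)) ^ 2 < ((x + 1) * ri) ^ 2 :=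
    pow_lt_pow_left₀ hIH (mul_nonneg ha.le (by linarith)) two_ne_zero
  have t1 := mul_lt_mul_of_pos_left hk (show (0:ℝ) < (x + 2) * (x + 1) ^ 2 by positivity)
  have t2s := mul_lt_mul_of_pos_left t2 (show (0:ℝ) < x + 2 by linarith)
  have hmain : 0 < 2 * a * (x + 1) ^ 2 * ((x + 2) * R - a * x) := by nlinarith [mul_pos ha ha]
  by_contra hcon
  push_neg at hcon
  have hle2 : (x + 2) * R - a * x ≤ 0 := by linarith
  have := mul_nonpos_of_nonneg_of_nonpos (show (0:ℝ) ≤ 2 * a * (x + 1) ^ 2 by positivity) hle2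
  linarith

lemma base_arith (a r1 r2 : ℝ) (ha : 0 < a) (hk : r1 ^ 2 + a ^ 2 < 2 * a * r2) :
    a * (2 - 1) < (2 + 1) * r2 := by nlinarith [sq_nonneg r1]

lemma key_arith (a ropt ri R D δ : ℝ) (ha : 0 < a) (hropta : ropt < a)
    (hri : ri ≤ ropt) (hri0 : 0 ≤ ri) (hR0 : 0 ≤ R) (hδ0 : 0 ≤ δ)
    (hpyth : ri ^ 2 + δ ^ 2 ≤ R ^ 2) (hDR : D ≤ R) (hfar : a < D + δ) :
    ri ^ 2 + a ^ 2 < 2 * a * R := by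
  rcases le_or_gt a R with hca | hca
  · nlinarith
  · have hδlb : a - R < δ := by linarith
    have h2 : (a - R) ^ 2 < δ ^ 2 := by nlinarith
    nlinarith

lemma final_arith (ε ropt rh H : ℝ) (hε : 0 < ε) (hr : 0 < ropt)
    (hhε : 2 ≤ ε * (H - 1)) (hh1 : 1 ≤ H - 1)
    (hclaim : (1 + ε) * ropt * (H - 1) < (H + 1) * rh) (hrh : rh ≤ ropt) : False := by
  have h1 : (H + 1) * rh ≤ (H + 1) * ropt := by
    apply mul_le_mul_of_nonneg_left hrh; linarith
  nlinarith [mul_le_mul_of_nonneg_left hhε hr.le]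

/-- if `P'` is a finite nonempty set with MEB radius `r_opt > 0`, `ε ∈ (0,1)` and
`h = ⌈2/ε⌉ + 1`, then there is no sequence `p₁, …, p_h ∈ P'` such that for every
`1 ≤ i ≤ h − 1` one has `‖p_{i+1} − c_i‖ > (1+ε)·r_opt`, where `c_i` is the MEB center of
`{p₁, …, p_i}`. -/
theorem no_long_far_sequence {d : ℕ}
    (P' : Set (EuclideanSpace ℝ (Fin d))) (hfin : P'.Finite) (hne : P'.Nonempty)
    (copt : EuclideanSpace ℝ (Fin d)) (ropt : ℝ) (hopt : IsMEB P' copt ropt) (hr : 0 < ropt)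
    (ε : ℝ) (hε : 0 < ε) (hε1 : ε < 1) (h : ℕ) (hh : h = ⌈2 / ε⌉₊ + 1) :
    ¬ ∃ (p : ℕ → EuclideanSpace ℝ (Fin d)) (c : ℕ → EuclideanSpace ℝ (Fin d)) (r : ℕ → ℝ),
        (∀ i : ℕ, 1 ≤ i → i ≤ h → p i ∈ P') ∧
        (∀ i : ℕ, 1 ≤ i → i ≤ h → IsMEB (p '' Set.Icc 1 i) (c i) (r i)) ∧
        (∀ i : ℕ, 1 ≤ i → i ≤ h - 1 → (1 + ε) * ropt < dist (p (i + 1)) (c i)) := by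
  rintro ⟨p, c, r, hmem, hmeb, hfar⟩
  set a := (1 + ε) * ropt with hadef
  have ha : 0 < a := by positivity
  have hropta : ropt < a := by rw [hadef]; nlinarith
  have hceil : (2 : ℝ) / ε ≤ (⌈2 / ε⌉₊ : ℝ) := Nat.le_ceil _
  have h2ε : (2 : ℝ) < 2 / ε := by
    rw [lt_div_iff₀ hε]; nlinarith
  have hh3 : 3 ≤ h := by
    have : 2 < ⌈(2:ℝ) / ε⌉₊ := by
      have := Nat.lt_ceil (n := 2) (a := (2:ℝ)/ε)
      rw [this]; push_cast; linarith
    omega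
  have hrle : ∀ i : ℕ, 1 ≤ i → i ≤ h → r i ≤ ropt := by
    intro i h1 h2
    refine (hmeb i h1 h2).2 copt ropt ?_
    rintro q ⟨j, hj, rfl⟩
    exact hopt.1 _ (hmem j hj.1 (le_trans hj.2 h2))
  have hrnonneg : ∀ i : ℕ, 1 ≤ i → i ≤ h → 0 ≤ r i := by
    intro i h1 h2
    have : p 1 ∈ p '' Set.Icc 1 i := ⟨1, ⟨le_refl 1, h1⟩, rfl⟩
    exact le_trans dist_nonneg ((hmeb i h1 h2).1 _ this)
  -- key recursion
  have key : ∀ i : ℕ, 1 ≤ i → i + 1 ≤ h → (r i) ^ 2 + a ^ 2 < 2 * a * r (i + 1) := by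
    intro i h1 h2
    have h2' : i ≤ h := by omega
    have hsub : p '' Set.Icc 1 i ⊆ p '' Set.Icc 1 (i + 1) :=
      Set.image_mono (Set.Icc_subset_Icc_right (by omega))
    have hne' : (p '' Set.Icc 1 i).Nonempty := ⟨p 1, 1, ⟨le_refl 1, h1⟩, rfl⟩
    have hmeb1 := hmeb (i + 1) (by omega) h2
    have hencl : ∀ s ∈ p '' Set.Icc 1 i, dist s (c (i + 1)) ≤ r (i + 1) :=
      fun s hs => hmeb1.1 s (hsub hs)
    have hpyth := meb_pythagoras hne' (hmeb i h1 h2') hencl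
    have hpmem : p (i + 1) ∈ p '' Set.Icc 1 (i + 1) := ⟨i + 1, ⟨by omega, le_refl _⟩, rfl⟩
    have hDR : dist (p (i + 1)) (c (i + 1)) ≤ r (i + 1) := hmeb1.1 _ hpmem
    have hfari : a < dist (p (i + 1)) (c i) := hfar i h1 (by omega)
    have htri : dist (p (i + 1)) (c i) ≤ dist (p (i + 1)) (c (i + 1)) + dist (c i) (c (i + 1)) := by
      rw [dist_comm (c i) (c (i+1))]; exact dist_triangle _ _ _
    exact key_arith a ropt (r i) (r (i + 1)) (dist (p (i + 1)) (c (i + 1)))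
      (dist (c i) (c (i + 1))) ha hropta (hrle i h1 h2') (hrnonneg i h1 h2')
      (hrnonneg (i + 1) (by omega) h2) dist_nonneg hpyth hDR (by linarith)
  -- induction
  have claim : ∀ i : ℕ, 2 ≤ i → i ≤ h → a * ((i : ℝ) - 1) < ((i : ℝ) + 1) * r i := by
    intro i hi
    induction i, hi using Nat.le_induction with
    | base =>
      intro _
      have hk := key 1 (le_refl 1) (by omega)
      have := base_arith a (r 1) (r 2) ha hk
      push_cast
      linarith
    | succ i hi IH =>
      intro hih
      have hIH := IH (by omega)
      have hk := key i (by omega) hih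
      have hx2 : (2:ℝ) ≤ (i:ℝ) := by exact_mod_cast hi
      have := step_arith a (i:ℝ) (r (i + 1)) (r i) ha hx2 hIH hk
      push_cast
      push_cast at this
      linarith
  -- final contradiction
  have hclaim := claim h (by omega) (le_refl h)
  have hrh : r h ≤ ropt := hrle h (by omega) (le_refl h)
  have hhε : (2:ℝ) ≤ ε * ((h : ℝ) - 1) := by
    have he : ((h : ℝ) - 1) = (⌈2 / ε⌉₊ : ℝ) := by rw [hh]; push_cast; ring
    rw [he]
    calc (2:ℝ) = ε * (2 / ε) := by field_simp
    _ ≤ ε * (⌈2 / ε⌉₊ : ℝ) := by nlinarith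
  have hh1 : (1:ℝ) ≤ (h:ℝ) - 1 := by
    have : (3:ℝ) ≤ (h:ℝ) := by exact_mod_cast hh3
    linarith
  rw [hadef] at hclaim
  exact final_arith ε ropt (r h) (h : ℝ) hε hr hhε hh1 hclaim hrh
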